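/- Uniform Gronwall inequality: let g, h, y be nonnegative locally integrable functions on (t₀, ∞) with y differentiable (y' locally integrable), satisfying y'(t) ≤ g(t)y(t) + h(t) for t ≥ t₀, and suppose there are positive constants r, a₁, a₂, a₃ such that for all t ≥ t₀: ∫_t^{t+r} g ≤ a₁, ∫_t^{t+r} h ≤ a₂, ∫_t^{t+r} y ≤ a₃. Then y(t + r) ≤ (a₃/r + a₂)·exp(a₁) for all t ≥ t₀. -/

import Mathlib

open MeasureTheory intervalIntegral

open Set Filter Topology

/-- Dini-derivative version of the hard FTC comparison lemma. -/
theorem dini_sub_le_integral {g g' φ : ℝ → ℝ} {a b : ℝ} (hab : a ≤ b)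
    (hcont : ContinuousOn g (Icc a b))
    (hderiv : ∀ x ∈ Ico a b, ∀ c, g' x < c → ∀ᶠ u in 𝓝[>] x, g u - g x ≤ (u - x) * c)
    (φint : IntegrableOn φ (Icc a b)) (hφg : ∀ x ∈ Ico a b, g' x ≤ φ x) :
    g b - g a ≤ ∫ y in a..b, φ y := by
  refine le_of_forall_pos_le_add fun ε εpos => ?_
  rcases exists_lt_lowerSemicontinuous_integral_lt φ φint εpos with
    ⟨G', f_lt_G', G'cont, G'int, G'lt_top, hG'⟩
  set s := {t | g t - g a ≤ ∫ u in a..t, (G' u).toReal} ∩ Icc a b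
  have s_closed : IsClosed s := by
    have : ContinuousOn (fun t => (g t - g a, ∫ u in a..t, (G' u).toReal)) (Icc a b) := by
      rw [← uIcc_of_le hab] at G'int hcont ⊢
      exact (hcont.sub continuousOn_const).prodMk (continuousOn_primitive_interval G'int)
    simp only [s, inter_comm]
    exact this.preimage_isClosed_of_isClosed isClosed_Icc OrderClosedTopology.isClosed_le'
  have main : Icc a b ⊆ {t | g t - g a ≤ ∫ u in a..t, (G' u).toReal} := by
    refine s_closed.Icc_subset_of_forall_exists_gt
      (by simp only [integral_same, mem_setOf_eq, sub_self, le_rfl]) fun t ht v t_lt_v => ?_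
    obtain ⟨y, g'_lt_y', y_lt_G'⟩ : ∃ y : ℝ, (g' t : EReal) < y ∧ (y : EReal) < G' t :=
      EReal.lt_iff_exists_real_btwn.1 ((EReal.coe_le_coe_iff.2 (hφg t ht.2)).trans_lt (f_lt_G' t))
    have I1 : ∀ᶠ u in 𝓝[>] t, (u - t) * y ≤ ∫ w in t..u, (G' w).toReal := by
      have B : ∀ᶠ u in 𝓝 t, (y : EReal) < G' u := G'cont.lowerSemicontinuousAt _ _ y_lt_G'
      rcases mem_nhds_iff_exists_Ioo_subset.1 B with ⟨m, M, ⟨hm, hM⟩, H⟩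
      have : Ioo t (min M b) ∈ 𝓝[>] t := Ioo_mem_nhdsGT (lt_min hM ht.right.right)
      filter_upwards [this] with u hu
      have I : Icc t u ⊆ Icc a b := Icc_subset_Icc ht.2.1 (hu.2.le.trans (min_le_right _ _))
      calc
        (u - t) * y = ∫ _ in Icc t u, y := by
          simp only [hu.left.le, MeasureTheory.integral_const, smul_eq_mul, measureReal_restrict_apply_univ, Real.volume_real_Icc_of_le hu.left.le, sub_nonneg,
            MeasurableSet.univ, Real.volume_Icc, Measure.restrict_apply, univ_inter,
            ENNReal.toReal_ofReal]
        _ ≤ ∫ w in t..u, (G' w).toReal := by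
          rw [intervalIntegral.integral_of_le hu.1.le, ← integral_Icc_eq_integral_Ioc]
          apply setIntegral_mono_ae_restrict
          · exact integrableOn_const measure_Icc_lt_top.ne
          · exact IntegrableOn.mono_set G'int I
          · have C1 : ∀ᵐ x : ℝ ∂volume.restrict (Icc t u), G' x < ⊤ :=
              ae_mono (Measure.restrict_mono I le_rfl) G'lt_top
            have C2 : ∀ᵐ x : ℝ ∂volume.restrict (Icc t u), x ∈ Icc t u :=
              ae_restrict_mem measurableSet_Icc
            filter_upwards [C1, C2] with x G'x hx
            apply EReal.coe_le_coe_iff.1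
            have : x ∈ Ioo m M := by
              simp only [hm.trans_le hx.left,
                (hx.right.trans_lt hu.right).trans_le (min_le_left M b), mem_Ioo, and_self_iff]
            refine (H this).out.le.trans_eq ?_
            exact (EReal.coe_toReal G'x.ne (f_lt_G' x).ne_bot).symm
    have I2 : ∀ᶠ u in 𝓝[>] t, g u - g t ≤ (u - t) * y := by
      have g'_lt_y : g' t < y := EReal.coe_lt_coe_iff.1 g'_lt_y'
      exact hderiv t ⟨ht.2.1, ht.2.2⟩ y g'_lt_y
    have I3 : ∀ᶠ u in 𝓝[>] t, g u - g t ≤ ∫ w in t..u, (G' w).toReal := by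
      filter_upwards [I1, I2] with u hu1 hu2 using hu2.trans hu1
    have I4 : ∀ᶠ u in 𝓝[>] t, u ∈ Ioc t (min v b) := by
      refine mem_nhdsGT_iff_exists_Ioc_subset.2 ⟨min v b, ?_, Subset.rfl⟩
      simp only [lt_min_iff, mem_Ioi]
      exact ⟨t_lt_v, ht.2.2⟩
    rcases (I3.and I4).exists with ⟨x, hx, h'x⟩
    refine ⟨x, ?_, Ioc_subset_Ioc le_rfl (min_le_left _ _) h'x⟩
    calc
      g x - g a = g t - g a + (g x - g t) := by abel
      _ ≤ (∫ w in a..t, (G' w).toReal) + ∫ w in t..x, (G' w).toReal := add_le_add ht.1 hx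
      _ = ∫ w in a..x, (G' w).toReal := by
        apply integral_add_adjacent_intervals
        · rw [intervalIntegrable_iff_integrableOn_Ioc_of_le ht.2.1]
          exact IntegrableOn.mono_set G'int
            (Ioc_subset_Icc_self.trans (Icc_subset_Icc le_rfl ht.2.2.le))
        · rw [intervalIntegrable_iff_integrableOn_Ioc_of_le h'x.1.le]
          apply IntegrableOn.mono_set G'int
          exact Ioc_subset_Icc_self.trans (Icc_subset_Icc ht.2.1 (h'x.2.trans (min_le_right _ _)))
  calc
    g b - g a ≤ ∫ y in a..b, (G' y).toReal := main (right_mem_Icc.2 hab)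
    _ ≤ (∫ y in a..b, φ y) + ε := by
      convert (show (∫ x in Icc a b, (G' x).toReal) ≤ (∫ x in Icc a b, φ x) + ε from hG'.le) <;>
        · rw [intervalIntegral.integral_of_le hab]
          simp only [integral_Icc_eq_integral_Ioc', Real.volume_singleton]

open MeasureTheory intervalIntegral Set Filter Topology

/-- Uniform Gronwall inequality (Foias–Prodi). -/
theorem stmt_4 (t₀ r a₁ a₂ a₃ : ℝ) (g h y : ℝ → ℝ)
    (hr : 0 < r) (ha₁ : 0 < a₁) (ha₂ : 0 < a₂) (ha₃ : 0 < a₃)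
    (hg0 : ∀ t, t₀ < t → 0 ≤ g t) (hh0 : ∀ t, t₀ < t → 0 ≤ h t)
    (hy0 : ∀ t, t₀ < t → 0 ≤ y t)
    (hgi : ∀ t, t₀ ≤ t → IntervalIntegrable g volume t (t + r))
    (hhi : ∀ t, t₀ ≤ t → IntervalIntegrable h volume t (t + r))
    (hyi : ∀ t, t₀ ≤ t → IntervalIntegrable y volume t (t + r))
    (hy' : ∀ t, t₀ < t → HasDerivAt y (deriv y t) t)
    (hineq : ∀ t, t₀ < t → deriv y t ≤ g t * y t + h t)
    (hg : ∀ t, t₀ ≤ t → ∫ s in t..(t + r), g s ≤ a₁)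
    (hh : ∀ t, t₀ ≤ t → ∫ s in t..(t + r), h s ≤ a₂)
    (hy : ∀ t, t₀ ≤ t → ∫ s in t..(t + r), y s ≤ a₃) :
    ∀ t, t₀ ≤ t → y (t + r) ≤ (a₃ / r + a₂) * Real.exp a₁ := by
  classical
  intro t ht
  set b := t + r with hb
  have htb : t < b := by rw [hb]; linarith
  have ht₀b : t₀ < b := lt_of_le_of_lt ht htb
  -- nonnegativity of integrals of nonnegative functions
  have intnn : ∀ (f : ℝ → ℝ), (∀ x, t₀ < x → 0 ≤ f x) → ∀ τ₁ τ₂ : ℝ, t₀ ≤ τ₁ → τ₁ ≤ τ₂ →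
      0 ≤ ∫ u in τ₁..τ₂, f u := by
    intro f hf τ₁ τ₂ h1 h2
    rw [intervalIntegral.integral_of_le h2]
    exact setIntegral_nonneg measurableSet_Ioc fun x hx => hf x (lt_of_le_of_lt h1 hx.1)
  have hgI : IntegrableOn g (Set.Ioc t b) volume := by
    have := hgi t ht
    rwa [intervalIntegrable_iff_integrableOn_Ioc_of_le (by linarith), ← hb] at this
  have hhI : IntegrableOn h (Set.Ioc t b) volume := by
    have := hhi t ht
    rwa [intervalIntegrable_iff_integrableOn_Ioc_of_le (by linarith), ← hb] at this
  have hyI : IntegrableOn y (Set.Ioc t b) volume := by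
    have := hyi t ht
    rwa [intervalIntegrable_iff_integrableOn_Ioc_of_le (by linarith), ← hb] at this
  set g₁ : ℝ → ℝ := (Set.Ioc t b).indicator g with hg₁def
  have hg₁int : Integrable g₁ volume := hgI.integrable_indicator measurableSet_Ioc
  have hae : ∀ᵐ x : ℝ, Tendsto (fun u => ⨍ z in Set.Icc x u, g₁ z) (𝓝[>] x) (𝓝 (g₁ x)) := by
    filter_upwards [(IsUnifLocDoublingMeasure.vitaliFamily (volume : Measure ℝ)
      1).ae_tendsto_average hg₁int.locallyIntegrable] with x hx
    exact hx.comp (Real.tendsto_Icc_vitaliFamily_right x)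
  set φ : ℝ → ℝ := fun τ =>
    if Tendsto (fun u => ⨍ z in Set.Icc τ u, g₁ z) (𝓝[>] τ) (𝓝 (g₁ τ)) then h τ
    else g τ * y τ + h τ with hφdef
  have hφae : φ =ᵐ[volume] h := by
    filter_upwards [hae] with x hx
    simp only [hφdef]
    rw [if_pos hx]
  -- Step 1: pointwise Gronwall bound
  have key : ∀ s ∈ Set.Ioc t b, y b ≤ (y s + a₂) * Real.exp a₁ := by
    intro s hs
    have ht₀s : t₀ < s := lt_of_le_of_lt ht hs.1
    have hsb : s ≤ b := hs.2
    have hIccsub : Set.Icc s b ⊆ Set.Ioc t b := fun x hx => ⟨lt_of_lt_of_le hs.1 hx.1, hx.2⟩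
    set G : ℝ → ℝ := fun τ => ∫ u in s..τ, g u with hGdef
    have hGint : ∀ τ₁ τ₂ : ℝ, τ₁ ∈ Set.Icc s b → τ₂ ∈ Set.Icc s b →
        IntervalIntegrable g volume τ₁ τ₂ := by
      intro τ₁ τ₂ h1 h2
      apply (hgi t ht).mono_set
      rw [Set.uIcc_of_le (by linarith : t ≤ t + r)]
      exact Set.uIcc_subset_Icc ⟨by linarith [h1.1, hs.1], by linarith [h1.2]⟩
        ⟨by linarith [h2.1, hs.1], by linarith [h2.2]⟩
    have hGdiff : ∀ τ₁ τ₂ : ℝ, τ₁ ∈ Set.Icc s b → τ₂ ∈ Set.Icc s b →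
        G τ₂ - G τ₁ = ∫ u in τ₁..τ₂, g u := by
      intro τ₁ τ₂ h1 h2
      exact integral_interval_sub_left (hGint s τ₂ (Set.left_mem_Icc.2 hsb) h2)
        (hGint s τ₁ (Set.left_mem_Icc.2 hsb) h1)
    have hGcont : ContinuousOn G (Set.Icc s b) := by
      have h1 : IntegrableOn g (Set.uIcc s b) volume := by
        rw [Set.uIcc_of_le hsb]; exact hgI.mono_set hIccsub
      have := intervalIntegral.continuousOn_primitive_interval h1
      rwa [Set.uIcc_of_le hsb] at this
    have hGnn : ∀ τ ∈ Set.Icc s b, 0 ≤ G τ := by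
      intro τ hτ
      exact intnn g hg0 s τ ht₀s.le hτ.1
    have hφint : IntegrableOn φ (Set.Icc s b) volume :=
      (hhI.mono_set hIccsub).congr (ae_restrict_of_ae hφae.symm)
    set Y : ℝ → ℝ := fun τ => y τ * Real.exp (-(G τ)) with hYdef
    have hYcont : ContinuousOn Y (Set.Icc s b) := by
      have h1 : ContinuousOn y (Set.Icc s b) := fun τ hτ =>
        ((hy' τ (lt_of_lt_of_le ht₀s hτ.1)).continuousAt).continuousWithinAt
      exact h1.mul (Real.continuous_exp.comp_continuousOn hGcont.neg)
    have hdini : ∀ x ∈ Set.Ico s b, ∀ c, φ x < c →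
        ∀ᶠ u in 𝓝[>] x, Y u - Y x ≤ (u - x) * c := by
      intro τ hτ c hc
      have hτ₀ : t₀ < τ := lt_of_lt_of_le ht₀s hτ.1
      have hτIoc : τ ∈ Set.Ioc t b := ⟨lt_of_lt_of_le hs.1 hτ.1, hτ.2.le⟩
      have hτIcc : τ ∈ Set.Icc s b := ⟨hτ.1, hτ.2.le⟩
      have hexpos : (0:ℝ) < Real.exp (-(G τ)) := Real.exp_pos _
      have hexple : Real.exp (-(G τ)) ≤ 1 := by
        rw [← Real.exp_zero]
        exact Real.exp_le_exp.2 (by linarith [hGnn τ hτIcc])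
      by_cases hgood : Tendsto (fun u => ⨍ z in Set.Icc τ u, g₁ z) (𝓝[>] τ) (𝓝 (g₁ τ))
      · -- good point: genuine right derivative of G
        have hG' : HasDerivWithinAt G (g τ) (Set.Ioi τ) τ := by
          rw [hasDerivWithinAt_iff_tendsto_slope]
          rw [Set.diff_singleton_eq_self (by simp : τ ∉ Set.Ioi τ)]
          have hgτ : g₁ τ = g τ := Set.indicator_of_mem hτIoc g
          rw [hgτ] at hgood
          apply hgood.congr'
          filter_upwards [Ioo_mem_nhdsGT hτ.2] with u hu
          have hτu : τ < u := hu.1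
          have huIcc : u ∈ Set.Icc s b := ⟨hτ.1.trans hτu.le, hu.2.le⟩
          have hIocsub : Set.Icc τ u ⊆ Set.Ioc t b := fun x hx =>
            ⟨lt_of_lt_of_le hτIoc.1 hx.1, hx.2.trans huIcc.2⟩
          have e1 : (∫ w in τ..u, g w) = ∫ w in Set.Icc τ u, g₁ w := by
            rw [intervalIntegral.integral_of_le hτu.le, ← integral_Icc_eq_integral_Ioc]
            exact (setIntegral_congr_fun measurableSet_Icc
              fun x hx => (Set.indicator_of_mem (hIocsub hx) g).symm)
          have e2 : G u - G τ = ∫ w in Set.Icc τ u, g₁ w := by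
            rw [hGdiff τ u hτIcc huIcc]; exact e1
          rw [setAverage_eq, Real.volume_real_Icc_of_le hτu.le, smul_eq_mul,
            slope_def_field, ← e2]
          rw [div_eq_inv_mul]
        have hyd : HasDerivWithinAt y (deriv y τ) (Set.Ioi τ) τ := (hy' τ hτ₀).hasDerivWithinAt
        have hE : HasDerivWithinAt (fun w => Real.exp (-(G w)))
            (Real.exp (-(G τ)) * -(g τ)) (Set.Ioi τ) τ := hG'.neg.exp
        have hYd : HasDerivWithinAt Y
            (deriv y τ * Real.exp (-(G τ)) + y τ * (Real.exp (-(G τ)) * -(g τ)))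
            (Set.Ioi τ) τ := hyd.mul hE
        have hφτ : φ τ = h τ := by simp only [hφdef]; rw [if_pos hgood]
        have hbound : deriv y τ * Real.exp (-(G τ)) + y τ * (Real.exp (-(G τ)) * -(g τ)) < c := by
          have h1 : deriv y τ - g τ * y τ ≤ h τ := by linarith [hineq τ hτ₀]
          have hhτ : 0 ≤ h τ := hh0 τ hτ₀
          have hcτ : h τ < c := by rw [hφτ] at hc; exact hc
          nlinarith [mul_le_mul_of_nonneg_left h1 hexpos.le,
            mul_le_of_le_one_left hhτ hexple]
        have hsl := hYd.limsup_slope_le' (by simp) hbound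
        filter_upwards [hsl, self_mem_nhdsWithin] with u hu hu2
        have hpos : (0:ℝ) < u - τ := sub_pos.2 hu2
        rw [slope_def_field, div_lt_iff₀ hpos] at hu
        nlinarith [hu]
      · -- bad point
        have hφτ : φ τ = g τ * y τ + h τ := by simp only [hφdef]; rw [if_neg hgood]
        have hyd : HasDerivWithinAt y (deriv y τ) (Set.Ioi τ) τ := (hy' τ hτ₀).hasDerivWithinAt
        have hφnn : 0 ≤ φ τ := by
          rw [hφτ]
          have := hg0 τ hτ₀; have := hh0 τ hτ₀; have := hy0 τ hτ₀
          positivity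
        have hcnn : (0:ℝ) ≤ c := le_of_lt (lt_of_le_of_lt hφnn hc)
        have hltc : deriv y τ < c := lt_of_le_of_lt (by linarith [hineq τ hτ₀, hφτ.symm ▸ hc] :
          deriv y τ ≤ φ τ) hc
        have hsl := hyd.limsup_slope_le' (by simp) hltc
        filter_upwards [hsl, Ioo_mem_nhdsGT hτ.2] with u hus huo
        have hτu : τ < u := huo.1
        have hpos : (0:ℝ) < u - τ := sub_pos.2 hτu
        rw [slope_def_field, div_lt_iff₀ hpos] at hus
        have hyu : y u - y τ ≤ (u - τ) * c := by linarith
        have huIcc : u ∈ Set.Icc s b := ⟨hτ.1.trans hτu.le, huo.2.le⟩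
        have hGmono : G τ ≤ G u := by
          have hd := hGdiff τ u hτIcc huIcc
          have h0 : 0 ≤ ∫ w in τ..u, g w := intnn g hg0 τ u hτ₀.le hτu.le
          linarith
        have hEle : Real.exp (-(G u)) ≤ Real.exp (-(G τ)) := Real.exp_le_exp.2 (by linarith)
        have hyu0 : 0 ≤ y u := hy0 u (hτ₀.trans hτu)
        have h1 : Y u ≤ y u * Real.exp (-(G τ)) := mul_le_mul_of_nonneg_left hEle hyu0
        have h2 : (y u - y τ) * Real.exp (-(G τ)) ≤ (u - τ) * c := by
          calc (y u - y τ) * Real.exp (-(G τ)) ≤ ((u - τ) * c) * Real.exp (-(G τ)) :=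
                mul_le_mul_of_nonneg_right hyu hexpos.le
            _ ≤ (u - τ) * c := mul_le_of_le_one_right (by positivity) hexple
        have h3 : (y u - y τ) * Real.exp (-(G τ)) =
            y u * Real.exp (-(G τ)) - y τ * Real.exp (-(G τ)) := by ring
        simp only [hYdef] at h1 ⊢
        linarith
    have hmain : Y b - Y s ≤ ∫ u in s..b, φ u :=
      dini_sub_le_integral hsb hYcont hdini hφint fun x _ => le_rfl
    have hφeq : (∫ u in s..b, φ u) = ∫ u in s..b, h u := by
      apply intervalIntegral.integral_congr_ae
      filter_upwards [hφae] with x hx _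
      exact hx
    have hhb : (∫ u in s..b, h u) ≤ a₂ := by
      have hi1 : IntervalIntegrable h volume t s := by
        apply (hhi t ht).mono_set
        rw [Set.uIcc_of_le (by linarith : t ≤ t + r)]
        exact Set.uIcc_subset_Icc ⟨le_refl t, by linarith⟩ ⟨hs.1.le, by linarith [hs.2]⟩
      have hi2 : IntervalIntegrable h volume s b := by
        apply (hhi t ht).mono_set
        rw [Set.uIcc_of_le (by linarith : t ≤ t + r)]
        exact Set.uIcc_subset_Icc ⟨hs.1.le, by linarith [hs.2]⟩ ⟨by linarith, by linarith⟩
      have hsplit : (∫ u in t..s, h u) + ∫ u in s..b, h u = ∫ u in t..b, h u :=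
        integral_add_adjacent_intervals hi1 hi2
      have h1 : 0 ≤ ∫ u in t..s, h u := intnn h hh0 t s ht hs.1.le
      have h2 := hh t ht
      rw [← hb] at h2
      linarith
    have hGb : G b ≤ a₁ := by
      have hi1 : IntervalIntegrable g volume t s := by
        apply (hgi t ht).mono_set
        rw [Set.uIcc_of_le (by linarith : t ≤ t + r)]
        exact Set.uIcc_subset_Icc ⟨le_refl t, by linarith⟩ ⟨hs.1.le, by linarith [hs.2]⟩
      have hi2 : IntervalIntegrable g volume s b :=
        hGint s b (Set.left_mem_Icc.2 hsb) (Set.right_mem_Icc.2 hsb)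
      have hsplit : (∫ u in t..s, g u) + ∫ u in s..b, g u = ∫ u in t..b, g u :=
        integral_add_adjacent_intervals hi1 hi2
      have h1 : 0 ≤ ∫ u in t..s, g u := intnn g hg0 t s ht hs.1.le
      have h2 := hg t ht
      rw [← hb] at h2
      simp only [hGdef]
      linarith
    have hYs : Y s = y s := by
      simp only [hYdef, hGdef, intervalIntegral.integral_same, neg_zero, Real.exp_zero, mul_one]
    have hfin : y b * Real.exp (-(G b)) - y s ≤ a₂ := by
      have : Y b - Y s ≤ a₂ := by rw [hφeq] at hmain; linarith
      rw [hYs] at this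
      exact this
    have hys0 : 0 ≤ y s := hy0 s ht₀s
    have h3 : y b ≤ (y s + a₂) * Real.exp (G b) := by
      have e1 : Real.exp (-(G b)) * Real.exp (G b) = 1 := by
        rw [← Real.exp_add]; simp
      have := mul_le_mul_of_nonneg_right
        (show y b * Real.exp (-(G b)) ≤ y s + a₂ by linarith) (Real.exp_pos (G b)).le
      rw [mul_assoc, e1, mul_one] at this
      exact this
    calc y b ≤ (y s + a₂) * Real.exp (G b) := h3
      _ ≤ (y s + a₂) * Real.exp a₁ :=
          mul_le_mul_of_nonneg_left (Real.exp_le_exp.2 hGb) (by linarith)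
  -- Step 2: integrate the bound over s ∈ (t, b]
  have hvol : (volume (Set.Ioc t b)).toReal = r := by
    rw [Real.volume_Ioc, hb, add_sub_cancel_left, ENNReal.toReal_ofReal hr.le]
  have hconst : IntegrableOn (fun _ : ℝ => y b) (Set.Ioc t b) volume :=
    integrableOn_const measure_Ioc_lt_top.ne
  have hrconst : IntegrableOn (fun _ : ℝ => a₂) (Set.Ioc t b) volume :=
    integrableOn_const measure_Ioc_lt_top.ne
  have hrhs : IntegrableOn (fun s => (y s + a₂) * Real.exp a₁) (Set.Ioc t b) volume :=
    (hyI.add hrconst).mul_const _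
  have hmono := setIntegral_mono_on hconst hrhs measurableSet_Ioc key
  rw [setIntegral_const, measureReal_def, hvol, smul_eq_mul] at hmono
  have hR : (∫ s in Set.Ioc t b, (y s + a₂) * Real.exp a₁) =
      ((∫ s in Set.Ioc t b, y s) + r * a₂) * Real.exp a₁ := by
    rw [MeasureTheory.integral_mul_const, integral_add hyI hrconst, setIntegral_const, measureReal_def, hvol, smul_eq_mul]
  have hyle : (∫ s in Set.Ioc t b, y s) ≤ a₃ := by
    have h2 := hy t ht
    rw [← hb, intervalIntegral.integral_of_le htb.le] at h2
    exact h2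
  have hybnn : 0 ≤ y b := hy0 b ht₀b
  have hfinal : r * y b ≤ (a₃ + r * a₂) * Real.exp a₁ := by
    rw [hR] at hmono
    nlinarith [Real.exp_pos a₁, hmono, hyle]
  have hstep : y b ≤ ((a₃ + r * a₂) * Real.exp a₁) / r := (le_div_iff₀ hr).2 (by linarith)
  calc y b ≤ ((a₃ + r * a₂) * Real.exp a₁) / r := hstep
    _ = (a₃ / r + a₂) * Real.exp a₁ := by field_simp
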